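/- A tree (connected acyclic undirected graph) is arbitrarily regularizable if and only if its two bipartition classes have equal cardinality. -/

import Mathlib

open Matrix BigOperators

open Classical in
/-- An undirected graph is arbitrarily regularizable if there is a real weighting of its
edges, not identically zero, and `r > 0`, such that `B w = r e` where `B` is the
incidence matrix. -/
def ArbReg {V : Type*} [Fintype V] [DecidableEq V] (G : SimpleGraph V) : Prop :=
  ∃ (w : Sym2 V → ℝ) (r : ℝ), 0 < r ∧ w ≠ 0 ∧ (∀ e ∉ G.edgeSet, w e = 0) ∧
    G.incMatrix ℝ *ᵥ w = fun _ => r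

/-- `U` together with its complement is a bipartition of `G`. -/
def IsBipartition {V : Type*} (G : SimpleGraph V) (U : Set V) : Prop :=
  ∀ ⦃u v⦄, G.Adj u v → ((u ∈ U) ↔ (v ∉ U))

open Classical in
open Finset in
-- column structure of incidence matrix
lemma incCol {V : Type*} [Fintype V] [DecidableEq V] (G : SimpleGraph V)
    {a b : V} (hab : G.Adj a b) (v : V) :
    G.incMatrix ℝ v s(a,b) = (if v = a then (1:ℝ) else 0) + (if v = b then (1:ℝ) else 0) := by
  classical
  by_cases hv : s(a,b) ∈ G.incidenceSet v
  · rw [G.incMatrix_of_mem_incidenceSet hv]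
    rcases hv with ⟨-, hv⟩
    rcases Sym2.mem_iff.mp hv with rfl | rfl
    · simp [hab.ne]
    · simp [hab.ne']
  · rw [G.incMatrix_of_notMem_incidenceSet hv]
    have hva : v ≠ a := by rintro rfl; exact hv ⟨hab, Sym2.mem_mk_left _ _⟩
    have hvb : v ≠ b := by rintro rfl; exact hv ⟨hab, Sym2.mem_mk_right _ _⟩
    simp [hva, hvb]

open Classical in
lemma sumCol {V : Type*} [Fintype V] [DecidableEq V] (G : SimpleGraph V)
    {a b : V} (hab : G.Adj a b) (T : Finset V) :
    ∑ v ∈ T, G.incMatrix ℝ v s(a,b)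
      = (if a ∈ T then (1:ℝ) else 0) + (if b ∈ T then (1:ℝ) else 0) := by
  simp only [incCol G hab, Finset.sum_add_distrib, Finset.sum_ite_eq', Pi.one_apply]

open Classical in
lemma forward {V : Type*} [Fintype V] [DecidableEq V] (G : SimpleGraph V)
    (U : Set V) (hU : IsBipartition G U)
    (w : Sym2 V → ℝ) (r : ℝ) (hr : 0 < r) (hw0 : ∀ e ∉ G.edgeSet, w e = 0)
    (hBw : G.incMatrix ℝ *ᵥ w = fun _ => r) : U.ncard = Uᶜ.ncard := by
  classical
  have key : ∀ T : Finset V, (∀ e ∈ G.edgeSet, ∑ v ∈ T, G.incMatrix ℝ v e = 1) →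
      (T.card : ℝ) * r = ∑ e ∈ G.edgeFinset, w e := by
    intro T hT
    have h1 : ∑ v ∈ T, (G.incMatrix ℝ *ᵥ w) v = (T.card : ℝ) * r := by
      rw [hBw]; simp [mul_comm]
    rw [← h1]
    simp only [Matrix.mulVec, dotProduct]
    rw [Finset.sum_comm]
    rw [← Finset.sum_subset (Finset.subset_univ G.edgeFinset)]
    · refine Finset.sum_congr rfl fun e he => ?_
      rw [← Finset.sum_mul, hT e (SimpleGraph.mem_edgeFinset.mp he), one_mul]
    · intro e _ he
      rw [hw0 e (by simpa using he)]
      simp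
  have hone : ∀ e ∈ G.edgeSet, ∑ v ∈ U.toFinset, G.incMatrix ℝ v e = 1 := by
    intro e he
    induction e with
    | _ a b =>
      have hab : G.Adj a b := he
      rw [sumCol G hab]
      by_cases ha : a ∈ U
      · have hb := (hU hab).mp ha
        simp [Set.mem_toFinset, ha, hb]
      · have hb : b ∈ U := by
          by_contra hb
          exact ha ((hU hab).mpr hb)
        simp [Set.mem_toFinset, ha, hb]
  have hone' : ∀ e ∈ G.edgeSet, ∑ v ∈ Uᶜ.toFinset, G.incMatrix ℝ v e = 1 := by
    intro e he
    induction e with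
    | _ a b =>
      have hab : G.Adj a b := he
      rw [sumCol G hab]
      by_cases ha : a ∈ U
      · have hb := (hU hab).mp ha
        simp [Set.mem_toFinset, ha, hb]
      · have hb : b ∈ U := by
          by_contra hb
          exact ha ((hU hab).mpr hb)
        simp [Set.mem_toFinset, ha, hb]
  have := (key _ hone).trans (key _ hone').symm
  have hcard : (U.toFinset.card : ℝ) = (Uᶜ.toFinset.card : ℝ) :=
    mul_right_cancel₀ hr.ne' this
  rw [Set.ncard_eq_toFinset_card', Set.ncard_eq_toFinset_card']
  exact_mod_cast hcard

open Classical in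
lemma backward {V : Type*} [Fintype V] [DecidableEq V] (G : SimpleGraph V)
    (hc : G.Connected) (U : Set V) (hU : IsBipartition G U)
    (hbal : U.ncard = Uᶜ.ncard) :
    ∃ (w : Sym2 V → ℝ) (r : ℝ), 0 < r ∧ w ≠ 0 ∧ (∀ e ∉ G.edgeSet, w e = 0) ∧
      G.incMatrix ℝ *ᵥ w = fun _ => r := by
  classical
  set cols : G.edgeFinset → EuclideanSpace ℝ V :=
    fun e => WithLp.toLp 2 (fun v => G.incMatrix ℝ v e.1) with hcols
  set S : Submodule ℝ (EuclideanSpace ℝ V) := Submodule.span ℝ (Set.range cols) with hS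
  set ones : EuclideanSpace ℝ V := WithLp.toLp 2 (fun _ => 1) with hones
  have hmem : ones ∈ S := by
    rw [← Submodule.orthogonal_orthogonal S, Submodule.mem_orthogonal]
    intro x hx
    -- x is orthogonal to every column
    have hx2 : ∀ a b : V, G.Adj a b → x a + x b = 0 := by
      intro a b hab
      have he : s(a,b) ∈ G.edgeFinset := SimpleGraph.mem_edgeFinset.mpr hab
      have h0 : inner ℝ (cols ⟨_, he⟩) x = (0 : ℝ) :=
        (Submodule.mem_orthogonal S x).mp hx _ (Submodule.subset_span ⟨_, rfl⟩)
      simp only [PiLp.inner_apply, RCLike.inner_apply, conj_trivial, hcols, PiLp.toLp_apply] at h0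
      rw [← h0]
      rw [Finset.sum_congr rfl (fun v _ => by
        rw [incCol G hab v, mul_add]), Finset.sum_add_distrib]
      simp [Finset.sum_ite_eq', ite_mul, mul_ite]
    -- the sign function
    set sgn : V → ℝ := fun v => if v ∈ U then 1 else -1 with hsgn
    have hflip : ∀ a b : V, G.Adj a b → sgn b = -sgn a := by
      intro a b hab
      by_cases ha : a ∈ U
      · have hb := (hU hab).mp ha
        simp [hsgn, ha, hb]
      · have hb : b ∈ U := by
          by_contra hb; exact ha ((hU hab).mpr hb)
        simp [hsgn, ha, hb]
    obtain ⟨v0⟩ := hc.nonempty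
    have hwalk : ∀ v : V, x v * sgn v = x v0 * sgn v0 := by
      intro v
      obtain ⟨p⟩ := hc.preconnected v0 v
      induction p with
      | nil => rfl
      | @cons u b c hadj q ih =>
        have h1 : x b = -x u := by linarith [hx2 u b hadj]
        have h2 : sgn b = -sgn u := hflip u b hadj
        rw [ih, h1, h2]
        ring
    -- conclude inner product with ones is zero
    have hsq : ∀ v : V, sgn v * sgn v = 1 := by
      intro v; by_cases hv : v ∈ U <;> simp [hsgn, hv]
    have hv : ∀ v : V, x v = (x v0 * sgn v0) * sgn v := by
      intro v
      calc x v = (x v * sgn v) * sgn v := by rw [mul_assoc, hsq v, mul_one]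
        _ = (x v0 * sgn v0) * sgn v := by rw [hwalk v]
    have hsgn1 : ∀ v ∈ U.toFinset, sgn v = 1 := by
      intro v hv; simp [hsgn, Set.mem_toFinset.mp hv]
    have hsgn2 : ∀ v ∈ U.toFinsetᶜ, sgn v = -1 := by
      intro v hv
      have : v ∉ U := by simpa [Set.mem_toFinset] using hv
      simp [hsgn, this]
    have hcard : (U.toFinset.card : ℝ) = (Uᶜ.toFinset.card : ℝ) := by
      rw [Set.ncard_eq_toFinset_card', Set.ncard_eq_toFinset_card'] at hbal
      exact_mod_cast hbal
    have hsum : ∑ v : V, sgn v = 0 := by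
      rw [← Finset.sum_add_sum_compl U.toFinset sgn,
        Finset.sum_congr rfl hsgn1, Finset.sum_congr rfl hsgn2]
      simp only [Finset.sum_const, nsmul_eq_mul, mul_one, mul_neg]
      rw [Set.toFinset_compl] at hcard
      rw [hcard]; ring
    rw [PiLp.inner_apply]
    simp only [RCLike.inner_apply, conj_trivial, hones, mul_one, PiLp.toLp_apply, one_mul]
    calc ∑ v : V, x v = ∑ v : V, (x v0 * sgn v0) * sgn v :=
          Finset.sum_congr rfl fun v _ => hv v
      _ = (x v0 * sgn v0) * ∑ v : V, sgn v := by rw [Finset.mul_sum]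
      _ = 0 := by rw [hsum, mul_zero]
  -- extract coefficients
  rw [hS, Submodule.mem_span_range_iff_exists_fun ℝ] at hmem
  obtain ⟨c, hcsum⟩ := hmem
  set w : Sym2 V → ℝ := fun e => if h : e ∈ G.edgeFinset then c ⟨e, h⟩ else 0 with hw
  have hBw : G.incMatrix ℝ *ᵥ w = fun _ => (1:ℝ) := by
    funext v
    have h1 : (G.incMatrix ℝ *ᵥ w) v = ∑ e ∈ G.edgeFinset, G.incMatrix ℝ v e * w e := by
      simp only [Matrix.mulVec, dotProduct]
      rw [← Finset.sum_subset (Finset.subset_univ G.edgeFinset)]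
      intro e _ he
      rw [hw]; simp [he]
    have h2 : ∑ i : G.edgeFinset, c i * cols i v
        = ∑ e ∈ G.edgeFinset, G.incMatrix ℝ v e * w e := by
      rw [Finset.univ_eq_attach,
        ← Finset.sum_attach G.edgeFinset (fun e => G.incMatrix ℝ v e * w e)]
      refine Finset.sum_congr rfl fun i _ => ?_
      rw [hw, hcols]
      simp only [i.2, dif_pos]
      ring
    have h3 : (∑ i : G.edgeFinset, c i • cols i) v = ∑ i : G.edgeFinset, c i * cols i v := by
      rw [WithLp.ofLp_sum, Finset.sum_apply]
      simp [smul_eq_mul]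
    rw [h1, ← h2, ← h3, hcsum]
  refine ⟨w, 1, one_pos, ?_, ?_, hBw⟩
  · intro hw0
    obtain ⟨v0⟩ := hc.nonempty
    have := congrFun hBw v0
    rw [hw0] at this
    simp [Matrix.mulVec] at this
  · intro e he
    rw [hw]
    have : e ∉ G.edgeFinset := by simpa using he
    simp [this]


/-- A tree is arbitrarily regularizable iff its two bipartition classes have equal
cardinality. -/
theorem tree_arb_reg_iff_balanced
    {V : Type*} [Fintype V] [DecidableEq V] (G : SimpleGraph V)
    (hc : G.Connected) (hac : G.IsAcyclic) (U : Set V) (hU : IsBipartition G U) :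
    ArbReg G ↔ U.ncard = Uᶜ.ncard := by
  constructor
  · rintro ⟨w, r, hr, -, hw0, hBw⟩
    exact forward G U hU w r hr hw0 hBw
  · exact backward G hc U hU
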